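/- The map sending (π,ε) ∈ Z_r ≀ S_n to the pair (σ, X), where σ ∈ S_n is determined by (π,ε) = (ρ,δ)∘σ with (ρ,δ) increasing, and X = NNeg((π,ε)^{-1}), is a bijection from Z_r ≀ S_n onto the set of pairs (σ, X) with σ ∈ S_n and X a multiset on [n] in which every element has multiplicity strictly less than r. -/

import Mathlib

open scoped Classical

/-- The type-A descent set of a colored permutation `(π, c)` (colors `c i < r`),
for the order `j^{c_j} < k^{c_k}` iff `c_j > c_k`, or `c_j = c_k` and `j < k`. -/
def desAset (n : ℕ) (π : Equiv.Perm (Fin n)) (c : Fin n → ℕ) : Finset (Fin n) :=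
  Finset.univ.filter (fun i => ∃ h : (i : ℕ) + 1 < n,
    c i < c ⟨(i : ℕ) + 1, h⟩ ∨ (c i = c ⟨(i : ℕ) + 1, h⟩ ∧ π ⟨(i : ℕ) + 1, h⟩ < π i))

/-- The type-A descent number. -/
def desA (n : ℕ) (π : Equiv.Perm (Fin n)) (c : Fin n → ℕ) : ℕ := (desAset n π c).card

/-- Multiplicity of `i` in `NNeg((π,c)⁻¹)`, i.e. the color of `i` in `(π,c)⁻¹`. -/
def cinv (r n : ℕ) (π : Equiv.Perm (Fin n)) (c : Fin n → ℕ) (i : Fin n) : ℕ :=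
  (r - c (π⁻¹ i)) % r

/-- `(r - (r - a) % r) % r = a` for `a < r`. -/
lemma stmt5_aux_mod {r a : ℕ} (ha : a < r) : (r - (r - a) % r) % r = a := by
  rcases Nat.eq_zero_or_pos a with h | h
  · subst h; simp [Nat.mod_self]
  · have h1 : (r - a) % r = r - a := Nat.mod_eq_of_lt (by omega)
    rw [h1]
    have h2 : r - (r - a) = a := by omega
    rw [h2, Nat.mod_eq_of_lt ha]

/-- The color is determined by `cinv`. -/
lemma stmt5_aux_det {r c x : ℕ} (hc : c < r) (hx : x < r) (h : (r - c) % r = x) :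
    c = (r - x) % r := by
  rcases Nat.eq_zero_or_pos c with h0 | h0
  · subst h0
    have : x = 0 := by rw [← h]; simp [Nat.mod_self]
    subst this; simp [Nat.mod_self]
  · have h1 : (r - c) % r = r - c := Nat.mod_eq_of_lt (by omega)
    have hx0 : x = r - c := by omega
    subst hx0
    have : r - (r - c) = c := by omega
    rw [this, Nat.mod_eq_of_lt hc]

/-- Strict monotonicity from adjacent comparisons, in the form needed here. -/
lemma stmt5_aux_adj {α : Type*} [Preorder α] {n : ℕ} {g : Fin n → α}
    (h : ∀ i : Fin n, ∀ hh : (i : ℕ) + 1 < n, g i < g ⟨(i : ℕ) + 1, hh⟩) :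
    StrictMono g := by
  cases n with
  | zero => exact fun a => a.elim0
  | succ m =>
    refine Fin.strictMono_iff_lt_succ.mpr fun i => ?_
    have hh : ((i.castSucc : Fin (m + 1)) : ℕ) + 1 < m + 1 := by
      simp
    have heq : (⟨((i.castSucc : Fin (m + 1)) : ℕ) + 1, hh⟩ : Fin (m + 1)) = i.succ := by
      ext; simp
    exact heq ▸ h i.castSucc hh

theorem stmt5 (r n : ℕ) (hr : 1 ≤ r) (σ : Equiv.Perm (Fin n)) (x : Fin n → ℕ)
    (hx : ∀ i, x i < r) :
    ∃! pc : Equiv.Perm (Fin n) × (Fin n → ℕ),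
      (∀ i, pc.2 i < r) ∧
      (∃ (ρ : Equiv.Perm (Fin n)) (δ : Fin n → ℕ), (∀ i, δ i < r) ∧ desA n ρ δ = 0 ∧
        pc.1 = ρ * σ ∧ ∀ i, pc.2 i = δ (σ i)) ∧
      (∀ i, cinv r n pc.1 pc.2 i = x i) := by
  set y : Fin n → ℕ := fun j => (r - x j) % r with hy_def
  have hy : ∀ j, y j < r := fun j => Nat.mod_lt _ hr
  set f : Fin n → ℕ ×ₗ ℕ := fun j => toLex (r - 1 - y j, (j : ℕ)) with hf_def
  have hfinj : Function.Injective f := by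
    intro j k h
    have h2 : ((ofLex (f j)).2 : ℕ) = (ofLex (f k)).2 := by rw [h]
    simp only [hf_def] at h2
    exact Fin.ext h2
  have key : ∀ j k : Fin n, f j < f k ↔ (y k < y j ∨ (y j = y k ∧ j < k)) := by
    intro j k
    simp only [hf_def]
    rw [Prod.Lex.lt_iff]
    simp only [ofLex_toLex]
    have hj := hy j; have hk := hy k
    constructor
    · rintro (h | ⟨h1, h2⟩)
      · left; omega
      · right; exact ⟨by omega, Fin.lt_def.mpr h2⟩
    · rintro (h | ⟨h1, h2⟩)
      · left; omega
      · right; exact ⟨by omega, Fin.lt_def.mp h2⟩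
  -- characterization of `desA = 0`
  have desA_iff : ∀ ρ : Equiv.Perm (Fin n),
      (desA n ρ (fun i => y (ρ i)) = 0 ↔ StrictMono (f ∘ ρ)) := by
    intro ρ
    unfold desA desAset
    rw [Finset.card_eq_zero, Finset.filter_eq_empty_iff]
    constructor
    · intro h
      apply stmt5_aux_adj
      intro i hh
      have hni := h (Finset.mem_univ i)
      push_neg at hni
      obtain ⟨h1, h2⟩ := hni hh
      rw [Function.comp_apply, Function.comp_apply, key]
      rcases Nat.lt_or_ge (y (ρ ⟨(i : ℕ) + 1, hh⟩)) (y (ρ i)) with hlt | hge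
      · exact Or.inl hlt
      · have heq : y (ρ i) = y (ρ ⟨(i : ℕ) + 1, hh⟩) := by omega
        have hne : ρ i ≠ ρ ⟨(i : ℕ) + 1, hh⟩ := by
          intro hc
          have h3 : i = (⟨(i : ℕ) + 1, hh⟩ : Fin n) := ρ.injective hc
          have h4 : (i : ℕ) = (i : ℕ) + 1 := congrArg Fin.val h3
          omega
        exact Or.inr ⟨heq, lt_of_le_of_ne (h2 heq) hne⟩
    · intro hsm i _
      rintro ⟨hh, hdes⟩
      simp only at hdes
      have hlt : f (ρ i) < f (ρ ⟨(i : ℕ) + 1, hh⟩) := hsm (by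
        rw [Fin.lt_def]; simp)
      rw [key] at hlt
      rcases hlt with h | ⟨h1, h2⟩
      · rcases hdes with h' | ⟨h', _⟩ <;> omega
      · rcases hdes with h' | ⟨h', h''⟩
        · omega
        · exact absurd h2 (not_lt.mpr h''.le)
  -- the canonical sorting permutation
  set ρ₀ : Equiv.Perm (Fin n) := Tuple.sort f with hρ₀
  have hmono₀ : Monotone (f ∘ ρ₀) := Tuple.monotone_sort f
  have hsm₀ : StrictMono (f ∘ ρ₀) :=
    hmono₀.strictMono_of_injective (hfinj.comp ρ₀.injective)
  refine ⟨⟨ρ₀ * σ, fun i => y ((ρ₀ * σ) i)⟩, ⟨fun i => hy _, ?_, ?_⟩, ?_⟩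
  · exact ⟨ρ₀, fun k => y (ρ₀ k), fun k => hy _, (desA_iff ρ₀).mpr hsm₀, rfl,
      fun i => rfl⟩
  · intro i
    unfold cinv
    simp only [(show ∀ (f : Equiv.Perm (Fin n)) (x : Fin n), f (f⁻¹ x) = x from fun f x => (Equiv.eq_symm_apply f).mp rfl)]
    exact stmt5_aux_mod (hx i)
  · rintro ⟨π, c⟩ ⟨hcr, ⟨ρ, δ, hδr, hdes, hπ, hc⟩, hcinv⟩
    simp only at hcr hcinv hπ hc
    have hcy : ∀ j, c j = y (π j) := by
      intro j
      have h1 := hcinv (π j)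
      unfold cinv at h1
      rw [(show ∀ (f : Equiv.Perm (Fin n)) (x : Fin n), f⁻¹ (f x) = x from fun f x => Equiv.Perm.inv_eq_iff_eq.mpr rfl)] at h1
      exact stmt5_aux_det (hcr j) (hx (π j)) h1
    have hδy : δ = fun k => y (ρ k) := by
      funext k
      have h1 := hc (σ⁻¹ k)
      rw [(show ∀ (f : Equiv.Perm (Fin n)) (x : Fin n), f (f⁻¹ x) = x from fun f x => (Equiv.eq_symm_apply f).mp rfl)] at h1
      have h2 : π (σ⁻¹ k) = ρ k := by
        rw [hπ]; simp [Equiv.Perm.mul_apply]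
      rw [← h1, hcy, h2]
    rw [hδy] at hdes
    have hsm : StrictMono (f ∘ ρ) := (desA_iff ρ).mp hdes
    have hρeq : ρ = ρ₀ := by
      have := Tuple.unique_monotone (f := f) hsm.monotone hmono₀
      ext1 i
      exact hfinj (congrFun this i)
    have hπeq : π = ρ₀ * σ := by rw [hπ, hρeq]
    have hceq : c = fun i => y ((ρ₀ * σ) i) := by
      funext i
      rw [hcy i, hπeq]
    simp only [Prod.mk.injEq]
    exact ⟨hπeq, hceq⟩
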